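/- arXiv:0901.4760 — 3 statements merged into one kernel-verified Lean document; each statement's English description precedes it below -/
import Mathlib

section
/- For any monotone f: {0,1}^n → {-1,1}, the total influence satisfies I(f) = Σ_{i=1}^n I_i(f) ≤ √n. -/
open Finset

noncomputable def expect {n : ℕ} (f : (Fin n → Bool) → ℝ) : ℝ :=
  (∑ ω : Fin n → Bool, f ω) / 2 ^ n

noncomputable def walsh {n : ℕ} (S : Finset (Fin n)) (ω : Fin n → Bool) : ℝ :=
  ∏ i ∈ S, (if ω i then -1 else 1)

noncomputable def walshCoeff {n : ℕ} (f : (Fin n → Bool) → ℝ) (S : Finset (Fin n)) : ℝ :=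
  expect (fun ω => f ω * walsh S ω)

noncomputable def noiseKernel {n : ℕ} (ε : ℝ) (ω ω' : Fin n → Bool) : ℝ :=
  ∏ i, (if ω i = ω' i then 1 - ε / 2 else ε / 2)

noncomputable def noiseE {n : ℕ} (ε : ℝ) (f g : (Fin n → Bool) → ℝ) : ℝ :=
  (∑ ω : Fin n → Bool, ∑ ω' : Fin n → Bool, noiseKernel ε ω ω' * f ω * g ω') / 2 ^ n

noncomputable def noiseP {n : ℕ} (ε : ℝ) (f : (Fin n → Bool) → ℝ) : ℝ :=
  (∑ ω : Fin n → Bool, ∑ ω' : Fin n → Bool,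
    noiseKernel ε ω ω' * (if f ω = f ω' then 0 else 1)) / 2 ^ n

noncomputable def influence {n : ℕ} (f : (Fin n → Bool) → ℝ) (i : Fin n) : ℝ :=
  expect (fun ω => if f ω = f (Function.update ω i (!ω i)) then 0 else 1)

noncomputable def totalInfluence {n : ℕ} (f : (Fin n → Bool) → ℝ) : ℝ :=
  ∑ i, influence f i

-- the flip involution
def flip' {n : ℕ} (i : Fin n) (ω : Fin n → Bool) : Fin n → Bool :=
  Function.update ω i (!ω i)

lemma flip_invol {n : ℕ} (i : Fin n) : Function.Involutive (flip' i) := by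
  intro ω
  unfold flip'
  rw [Function.update_idem]
  simp

lemma walsh_flip {n : ℕ} (i : Fin n) (ω : Fin n → Bool) :
    walsh {i} (flip' i ω) = - walsh {i} ω := by
  simp only [walsh, flip', Finset.prod_singleton, Function.update_self]
  cases ω i <;> norm_num

lemma pointwise {n : ℕ} (f : (Fin n → Bool) → ℝ)
    (hb : ∀ ω, f ω = 1 ∨ f ω = -1) (hmono : Monotone f) (i : Fin n) (ω : Fin n → Bool) :
    f ω * walsh {i} ω + f (flip' i ω) * walsh {i} (flip' i ω)
      = -2 * (if f ω = f (flip' i ω) then 0 else 1) := by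
  rw [walsh_flip]
  have hw : walsh {i} ω = if ω i then -1 else 1 := by simp [walsh]
  cases hwi : ω i with
  | false =>
    have hle : f ω ≤ f (flip' i ω) := by
      apply hmono; intro j; by_cases hj : j = i
      · subst hj; simp [flip', hwi]
      · simp [flip', Function.update_of_ne hj]
    have hw1 : walsh {i} ω = 1 := by rw [hw, hwi]; norm_num
    rcases hb ω with h1 | h1 <;> rcases hb (flip' i ω) with h2 | h2 <;>
      rw [h1, h2, hw1] <;> norm_num <;> linarith
  | true =>
    have hle : f (flip' i ω) ≤ f ω := by
      apply hmono; intro j; by_cases hj : j = i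
      · subst hj; simp [flip', hwi]
      · simp [flip', Function.update_of_ne hj]
    have hw1 : walsh {i} ω = -1 := by rw [hw, hwi]; norm_num
    rcases hb ω with h1 | h1 <;> rcases hb (flip' i ω) with h2 | h2 <;>
      rw [h1, h2, hw1] <;> norm_num <;> linarith

lemma influence_eq_neg_coeff {n : ℕ} (f : (Fin n → Bool) → ℝ)
    (hb : ∀ ω, f ω = 1 ∨ f ω = -1) (hmono : Monotone f) (i : Fin n) :
    influence f i = - walshCoeff f {i} := by
  unfold influence walshCoeff _root_.expect
  rw [← neg_div]
  congr 1
  have hsum : ∑ ω : Fin n → Bool, f (flip' i ω) * walsh {i} (flip' i ω)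
      = ∑ ω : Fin n → Bool, f ω * walsh {i} ω :=
    Fintype.sum_bijective (flip' i) (flip_invol i).bijective _ _ (fun ω => rfl)
  have h3 : ∑ ω : Fin n → Bool,
        (f ω * walsh {i} ω + f (flip' i ω) * walsh {i} (flip' i ω))
      = ∑ ω : Fin n → Bool, -2 * (if f ω = f (flip' i ω) then 0 else 1) :=
    Finset.sum_congr rfl (fun ω _ => pointwise f hb hmono i ω)
  rw [Finset.sum_add_distrib, hsum, ← Finset.mul_sum] at h3
  have : (∑ ω : Fin n → Bool, (if f ω = f (Function.update ω i (!ω i)) then (0:ℝ) else 1))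
      = ∑ ω : Fin n → Bool, (if f ω = f (flip' i ω) then (0:ℝ) else 1) := rfl
  rw [this]
  linarith

lemma walsh_orth {n : ℕ} (ω ω' : Fin n → Bool) :
    ∑ S : Finset (Fin n), walsh S ω * walsh S ω' = if ω = ω' then (2:ℝ)^n else 0 := by
  have h1 : ∀ S : Finset (Fin n), walsh S ω * walsh S ω'
      = ∏ i ∈ S, ((if ω i then (-1:ℝ) else 1) * (if ω' i then -1 else 1)) := by
    intro S; rw [walsh, walsh, ← Finset.prod_mul_distrib]
  calc ∑ S : Finset (Fin n), walsh S ω * walsh S ω'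
      = ∑ S ∈ (univ : Finset (Fin n)).powerset,
          ((∏ i ∈ S, ((if ω i then (-1:ℝ) else 1) * (if ω' i then -1 else 1)))
            * ∏ i ∈ univ \ S, (1:ℝ)) := by
        rw [Finset.powerset_univ]
        exact Finset.sum_congr rfl
          (fun S _ => by rw [h1 S, Finset.prod_const_one, mul_one])
    _ = ∏ i, ((if ω i then (-1:ℝ) else 1) * (if ω' i then -1 else 1) + 1) :=
        (Finset.prod_add _ _ _).symm
    _ = ∏ i, (if ω i = ω' i then (2:ℝ) else 0) := by
        apply Finset.prod_congr rfl
        intro i _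
        cases h : ω i <;> cases h' : ω' i <;> norm_num
    _ = if ω = ω' then (2:ℝ)^n else 0 := by
        by_cases h : ω = ω'
        · subst h; simp
        · rw [if_neg h]
          obtain ⟨i, hi⟩ : ∃ i, ω i ≠ ω' i := by
            by_contra hc; push_neg at hc; exact h (funext hc)
          exact Finset.prod_eq_zero (Finset.mem_univ i) (if_neg hi)

lemma parseval {n : ℕ} (f : (Fin n → Bool) → ℝ) (hb : ∀ ω, f ω = 1 ∨ f ω = -1) :
    ∑ S : Finset (Fin n), (walshCoeff f S)^2 = 1 := by
  have hA : ∑ S : Finset (Fin n), (∑ ω : Fin n → Bool, f ω * walsh S ω)^2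
      = (2:ℝ)^n * (2:ℝ)^n := by
    have step1 : ∀ S : Finset (Fin n), (∑ ω : Fin n → Bool, f ω * walsh S ω)^2
        = ∑ ω : Fin n → Bool, ∑ ω' : Fin n → Bool,
            f ω * f ω' * (walsh S ω * walsh S ω') := by
      intro S
      rw [sq, Finset.sum_mul_sum]
      exact Finset.sum_congr rfl (fun ω _ => Finset.sum_congr rfl (fun ω' _ => by ring))
    calc ∑ S : Finset (Fin n), (∑ ω : Fin n → Bool, f ω * walsh S ω)^2
        = ∑ ω : Fin n → Bool, ∑ ω' : Fin n → Bool,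
            f ω * f ω' * ∑ S : Finset (Fin n), walsh S ω * walsh S ω' := by
          rw [Finset.sum_congr rfl (fun S _ => step1 S)]
          rw [Finset.sum_comm]
          apply Finset.sum_congr rfl; intro ω _
          rw [Finset.sum_comm]
          apply Finset.sum_congr rfl; intro ω' _
          rw [Finset.mul_sum]
      _ = ∑ ω : Fin n → Bool, ∑ ω' : Fin n → Bool,
            f ω * f ω' * (if ω = ω' then (2:ℝ)^n else 0) := by
          apply Finset.sum_congr rfl; intro ω _
          apply Finset.sum_congr rfl; intro ω' _
          rw [walsh_orth]
      _ = ∑ ω : Fin n → Bool, f ω * f ω * (2:ℝ)^n := by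
          apply Finset.sum_congr rfl; intro ω _
          rw [Finset.sum_eq_single ω]
          · simp
          · intro ω' _ hne
            simp [Ne.symm hne]
          · intro h; exact absurd (Finset.mem_univ ω) h
      _ = (2:ℝ)^n * (2:ℝ)^n := by
          have : ∀ ω : Fin n → Bool, f ω * f ω = 1 := by
            intro ω; rcases hb ω with h | h <;> rw [h] <;> norm_num
          rw [Finset.sum_congr rfl (fun ω _ => by rw [this ω])]
          simp [Finset.card_univ, mul_comm]
  have h2n : ((2:ℝ)^n) ≠ 0 := by positivity
  calc ∑ S : Finset (Fin n), (walshCoeff f S)^2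
      = (∑ S : Finset (Fin n), (∑ ω : Fin n → Bool, f ω * walsh S ω)^2)
          / ((2:ℝ)^n * (2:ℝ)^n) := by
        rw [Finset.sum_div]
        apply Finset.sum_congr rfl; intro S _
        rw [walshCoeff, _root_.expect, div_pow, sq ((2:ℝ)^n)]
    _ = 1 := by rw [hA, div_self (by positivity)]

theorem monotone_total_influence_le_sqrt' {n : ℕ} (f : (Fin n → Bool) → ℝ)
    (hb : ∀ ω, f ω = 1 ∨ f ω = -1) (hmono : Monotone f) :
    (∑ i, influence f i) ≤ Real.sqrt n := by
  have hnonneg : ∀ i, 0 ≤ influence f i := by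
    intro i
    unfold influence _root_.expect
    apply div_nonneg _ (by positivity)
    apply Finset.sum_nonneg
    intro ω _
    split <;> norm_num
  have hsq : ∀ i, (influence f i)^2 = (walshCoeff f {i})^2 := by
    intro i
    rw [influence_eq_neg_coeff f hb hmono i, neg_sq]
  have hle1 : ∑ i, (influence f i)^2 ≤ 1 := by
    rw [Finset.sum_congr rfl (fun i _ => hsq i)]
    have himg : ∑ S ∈ Finset.univ.image (fun i : Fin n => ({i} : Finset (Fin n))),
            (walshCoeff f S)^2 = ∑ i, (walshCoeff f {i})^2 :=
      Finset.sum_image (fun a _ b _ h => Finset.singleton_injective h)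
    rw [← himg, ← parseval f hb]
    exact Finset.sum_le_sum_of_subset_of_nonneg (Finset.subset_univ _)
      (fun S _ _ => sq_nonneg _)
  have hcs : (∑ i, influence f i)^2 ≤ (n : ℝ) * 1 := by
    have := Finset.sum_mul_sq_le_sq_mul_sq Finset.univ
      (fun _ : Fin n => (1:ℝ)) (fun i => influence f i)
    simp only [one_mul, one_pow, Finset.sum_const, Finset.card_univ,
      Fintype.card_fin, nsmul_eq_mul, mul_one] at this
    calc (∑ i, influence f i)^2 ≤ (n : ℝ) * ∑ i, (influence f i)^2 := this
      _ ≤ (n : ℝ) * 1 := by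
          apply mul_le_mul_of_nonneg_left hle1 (by positivity)
  rw [Real.le_sqrt (Finset.sum_nonneg (fun i _ => hnonneg i)) (by positivity)]
  linarith

/-- For a monotone Boolean function on {0,1}^n, the total influence is
at most √n. -/
theorem monotone_total_influence_le_sqrt {n : ℕ} (f : (Fin n → Bool) → ℝ)
    (hb : ∀ ω, f ω = 1 ∨ f ω = -1) (hmono : Monotone f) :
    totalInfluence f ≤ Real.sqrt n := by
  rw [totalInfluence]
  exact monotone_total_influence_le_sqrt' f hb hmono
end

section
/- Let f_n: {0,1}^{m_n} → {-1,1} be a sequence with I(f_n) ≤ C n^ρ for all n and some constants C, ρ > 0. If α > ρ and ε_n = n^{-α}, then E[f_n(ω)f_n(ω_{ε_n})] → 1 as n → ∞ (and consequently P(f_n(ω) ≠ f_n(ω_{ε_n})) → 0). -/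
open Finset

section Aux
variable {m : ℕ}

lemma sum_pi_prod (F : Fin m → Bool → ℝ) :
    ∑ ω : Fin m → Bool, ∏ i, F i (ω i) = ∏ i, (F i false + F i true) := by
  rw [← Fintype.prod_sum F]
  exact Finset.prod_congr rfl fun i _ => by rw [Fintype.sum_bool]; ring

lemma kernel_marg (ε : ℝ) (ω : Fin m → Bool) (k : Fin m) (h : Bool → ℝ) :
    ∑ ω' : Fin m → Bool, noiseKernel ε ω ω' * h (ω' k)
      = (1 - ε / 2) * h (ω k) + ε / 2 * h (!(ω k)) := by
  set G : Fin m → Bool → ℝ :=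
    fun i b => (if ω i = b then 1 - ε / 2 else ε / 2) * (if i = k then h b else 1) with hG
  have key : ∀ ω' : Fin m → Bool, noiseKernel ε ω ω' * h (ω' k) = ∏ i, G i (ω' i) := by
    intro ω'
    rw [hG]
    simp only [Finset.prod_mul_distrib]
    rw [Finset.prod_ite_eq' Finset.univ k (fun i => h (ω' i))]
    simp [noiseKernel]
  rw [Finset.sum_congr rfl fun ω' _ => key ω', sum_pi_prod]
  rw [Finset.prod_eq_single_of_mem k (Finset.mem_univ k)
    (fun i _ hik => by simp only [hG, if_neg hik, mul_one]; cases ω i <;> simp)]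
  simp only [hG, if_pos rfl]
  cases ω k <;> simp <;> ring

lemma kernel_rowsum (ε : ℝ) (ω : Fin m → Bool) :
    ∑ ω' : Fin m → Bool, noiseKernel ε ω ω' = 1 := by
  have h := sum_pi_prod (fun i b => if ω i = b then (1:ℝ) - ε / 2 else ε / 2)
  simp only [noiseKernel]
  rw [h]
  exact Finset.prod_eq_one fun i _ => by cases ω i <;> simp

lemma kernel_nonneg {ε : ℝ} (hε0 : 0 ≤ ε) (hε2 : ε ≤ 2) (ω ω' : Fin m → Bool) :
    0 ≤ noiseKernel ε ω ω' := by
  refine Finset.prod_nonneg fun i _ => ?_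
  by_cases h : ω i = ω' i <;> simp [h] <;> linarith

def splice (k : ℕ) (ω ω' : Fin m → Bool) : Fin m → Bool :=
  fun i => if (i : ℕ) < k then ω' i else ω i

lemma splice_zero (ω ω' : Fin m → Bool) : splice 0 ω ω' = ω := by
  funext i; simp [splice]

lemma splice_top (ω ω' : Fin m → Bool) : splice m ω ω' = ω' := by
  funext i; simp [splice, i.isLt]

lemma splice_succ (k : Fin m) (ω ω' : Fin m → Bool) :
    splice (k + 1) ω ω' = Function.update (splice k ω ω') k (ω' k) := by
  funext i
  by_cases hik : i = k
  · subst hik; simp [splice, Function.update]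
  · have : (i : ℕ) ≠ (k : ℕ) := fun h => hik (Fin.ext h)
    simp only [splice, Function.update, dif_neg hik]
    by_cases h2 : (i : ℕ) < k
    · rw [if_pos h2, if_pos (Nat.lt_succ_of_lt h2)]
    · rw [if_neg h2, if_neg (by omega)]

lemma splice_splice (k : ℕ) (ω ω' : Fin m → Bool) :
    splice k (splice k ω ω') (splice k ω' ω) = ω := by
  funext i; by_cases h : (i : ℕ) < k <;> simp [splice, h]

lemma kernel_splice (ε : ℝ) (k : ℕ) (ω ω' : Fin m → Bool) :
    noiseKernel ε (splice k ω ω') (splice k ω' ω) = noiseKernel ε ω ω' := by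
  unfold noiseKernel
  refine Finset.prod_congr rfl fun i _ => ?_
  by_cases h : (i : ℕ) < k <;> simp [splice, h, eq_comm]

/-- the telescoping (hybrid) pointwise bound -/
lemma telescope_bound (f : (Fin m → Bool) → ℝ) (ω ω' : Fin m → Bool) :
    (if f ω = f ω' then (0:ℝ) else 1)
      ≤ ∑ k : Fin m, (if f (splice k ω ω') = f (splice (k + 1) ω ω') then (0:ℝ) else 1) := by
  by_cases h : f ω = f ω'
  · rw [if_pos h]
    exact Finset.sum_nonneg fun k _ => by positivity
  · rw [if_neg h]
    have : ∃ k : Fin m, f (splice k ω ω') ≠ f (splice (k + 1) ω ω') := by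
      by_contra hc
      push_neg at hc
      have key : ∀ k : ℕ, k ≤ m → f (splice k ω ω') = f ω := by
        intro k
        induction k with
        | zero => intro _; rw [splice_zero]
        | succ k ih =>
          intro hk
          have h1 := hc ⟨k, by omega⟩
          simp only [Fin.val_mk] at h1
          exact h1.symm.trans (ih (by omega))
      exact h ((key m le_rfl).symm.trans (by rw [splice_top]))
    obtain ⟨k, hk⟩ := this
    have h1 : (1:ℝ) = if f (splice k ω ω') = f (splice ((k:ℕ) + 1) ω ω') then 0 else 1 := by
      rw [if_neg hk]
    refine h1.le.trans ?_
    exact Finset.single_le_sum (f := fun k : Fin m =>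
          if f (splice k ω ω') = f (splice ((k:ℕ) + 1) ω ω') then (0:ℝ) else 1)
          (fun j _ => by positivity) (Finset.mem_univ k)

/-- one step of the hybrid argument -/
lemma step_eq (ε : ℝ) (f : (Fin m → Bool) → ℝ) (k : Fin m) :
    ∑ ω : Fin m → Bool, ∑ ω' : Fin m → Bool, noiseKernel ε ω ω' *
        (if f (splice k ω ω') = f (splice ((k:ℕ) + 1) ω ω') then (0:ℝ) else 1)
      = ε / 2 * ∑ y : Fin m → Bool,
          (if f y = f (Function.update y k (!y k)) then (0:ℝ) else 1) := by
  -- rewrite the (k+1)-splice as an update of the k-splice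
  have hrw : ∀ ω ω' : Fin m → Bool,
      noiseKernel ε ω ω' *
        (if f (splice k ω ω') = f (splice ((k:ℕ) + 1) ω ω') then (0:ℝ) else 1)
      = noiseKernel ε ω ω' *
        (if f (splice k ω ω') = f (Function.update (splice k ω ω') k (ω' k)) then (0:ℝ) else 1) := by
    intro ω ω'; rw [splice_succ]
  simp only [hrw]
  have hΦ : Function.Bijective
      (fun p : (Fin m → Bool) × (Fin m → Bool) => (splice (k:ℕ) p.1 p.2, splice (k:ℕ) p.2 p.1)) := by
    apply Function.Involutive.bijective
    intro p
    simp [splice_splice]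
  have hmarg : ∀ y : Fin m → Bool,
      ∑ ω' : Fin m → Bool, noiseKernel ε y ω' *
          (if f y = f (Function.update y k (ω' k)) then (0:ℝ) else 1)
        = ε / 2 * (if f y = f (Function.update y k (!y k)) then (0:ℝ) else 1) := by
    intro y
    have := kernel_marg ε y k
      (fun c => if f y = f (Function.update y k c) then (0:ℝ) else 1)
    rw [this, Function.update_eq_self, if_pos rfl]
    ring
  calc ∑ ω : Fin m → Bool, ∑ ω' : Fin m → Bool, noiseKernel ε ω ω' *
        (if f (splice (k:ℕ) ω ω') = f (Function.update (splice (k:ℕ) ω ω') k (ω' k)) then (0:ℝ) else 1)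
      = ∑ p : (Fin m → Bool) × (Fin m → Bool), noiseKernel ε p.1 p.2 *
          (if f (splice (k:ℕ) p.1 p.2)
            = f (Function.update (splice (k:ℕ) p.1 p.2) k (p.2 k)) then (0:ℝ) else 1) :=
        (Fintype.sum_prod_type' (f := fun ω ω' : Fin m → Bool => noiseKernel ε ω ω' *
          (if f (splice (k:ℕ) ω ω')
            = f (Function.update (splice (k:ℕ) ω ω') k (ω' k)) then (0:ℝ) else 1))).symm
    _ = ∑ q : (Fin m → Bool) × (Fin m → Bool), noiseKernel ε q.1 q.2 *
          (if f q.1 = f (Function.update q.1 k (q.2 k)) then (0:ℝ) else 1) := by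
        refine Fintype.sum_bijective _ hΦ _ _ fun p => ?_
        simp only
        rw [kernel_splice]
        have hsp : splice (k:ℕ) p.2 p.1 k = p.2 k := if_neg (lt_irrefl _)
        simp only [hsp]
    _ = ∑ y : Fin m → Bool, ∑ ω' : Fin m → Bool, noiseKernel ε y ω' *
          (if f y = f (Function.update y k (ω' k)) then (0:ℝ) else 1) :=
        Fintype.sum_prod_type' (f := fun y ω' : Fin m → Bool => noiseKernel ε y ω' *
          (if f y = f (Function.update y k (ω' k)) then (0:ℝ) else 1))
    _ = ∑ y : Fin m → Bool, ε / 2 *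
          (if f y = f (Function.update y k (!y k)) then (0:ℝ) else 1) :=
        Finset.sum_congr rfl fun y _ => hmarg y
    _ = ε / 2 * ∑ y : Fin m → Bool,
          (if f y = f (Function.update y k (!y k)) then (0:ℝ) else 1) :=
        (Finset.mul_sum _ _ _).symm

/-- the key inequality: P(f(ω) ≠ f(ω_ε)) ≤ (ε/2) I(f) -/
lemma noiseP_le {ε : ℝ} (hε0 : 0 ≤ ε) (hε2 : ε ≤ 2) (f : (Fin m → Bool) → ℝ) :
    noiseP ε f ≤ ε / 2 * totalInfluence f := by
  have h2m : (0:ℝ) < 2 ^ m := by positivity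
  rw [noiseP]
  rw [show ε / 2 * totalInfluence f
      = (∑ k : Fin m, ε / 2 * ∑ y : Fin m → Bool,
          (if f y = f (Function.update y k (!y k)) then (0:ℝ) else 1)) / 2 ^ m by
    rw [totalInfluence, Finset.mul_sum, Finset.sum_div]
    refine Finset.sum_congr rfl fun k _ => ?_
    simp only [influence, _root_.expect]
    field_simp]
  refine div_le_div_of_nonneg_right ?_ h2m.le
  calc ∑ ω : Fin m → Bool, ∑ ω' : Fin m → Bool,
        noiseKernel ε ω ω' * (if f ω = f ω' then (0:ℝ) else 1)
      ≤ ∑ ω : Fin m → Bool, ∑ ω' : Fin m → Bool, noiseKernel ε ω ω' *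
          ∑ k : Fin m, (if f (splice k ω ω') = f (splice ((k:ℕ) + 1) ω ω') then (0:ℝ) else 1) := by
        refine Finset.sum_le_sum fun ω _ => Finset.sum_le_sum fun ω' _ => ?_
        exact mul_le_mul_of_nonneg_left (telescope_bound f ω ω') (kernel_nonneg hε0 hε2 ω ω')
    _ = ∑ k : Fin m, ∑ ω : Fin m → Bool, ∑ ω' : Fin m → Bool, noiseKernel ε ω ω' *
          (if f (splice k ω ω') = f (splice ((k:ℕ) + 1) ω ω') then (0:ℝ) else 1) := by
        simp only [Finset.mul_sum]
        exact (Finset.sum_congr rfl fun ω _ => Finset.sum_comm).trans Finset.sum_comm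
    _ = ∑ k : Fin m, ε / 2 * ∑ y : Fin m → Bool,
          (if f y = f (Function.update y k (!y k)) then (0:ℝ) else 1) :=
        Finset.sum_congr rfl fun k _ => step_eq ε f k

lemma noiseP_nonneg {ε : ℝ} (hε0 : 0 ≤ ε) (hε2 : ε ≤ 2) (f : (Fin m → Bool) → ℝ) :
    0 ≤ noiseP ε f := by
  apply div_nonneg _ (by positivity)
  refine Finset.sum_nonneg fun ω _ => Finset.sum_nonneg fun ω' _ => ?_
  refine mul_nonneg (kernel_nonneg hε0 hε2 ω ω') (by positivity)

lemma noiseE_eq (ε : ℝ) (f : (Fin m → Bool) → ℝ) (hb : ∀ ω, f ω = 1 ∨ f ω = -1) :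
    noiseE ε f f = 1 - 2 * noiseP ε f := by
  have h2m : (2:ℝ) ^ m ≠ 0 := by positivity
  have key : ∀ ω ω' : Fin m → Bool,
      noiseKernel ε ω ω' * f ω * f ω'
        = noiseKernel ε ω ω' - 2 * (noiseKernel ε ω ω' * (if f ω = f ω' then (0:ℝ) else 1)) := by
    intro ω ω'
    rcases hb ω with h1 | h1 <;> rcases hb ω' with h2 | h2 <;>
      rw [h1, h2] <;> norm_num <;> ring
  rw [noiseE, noiseP]
  simp only [key, Finset.sum_sub_distrib, ← Finset.mul_sum, kernel_rowsum]
  rw [Finset.sum_const, Finset.card_univ]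
  simp only [Fintype.card_fun, Fintype.card_bool, Fintype.card_fin, nsmul_eq_mul, mul_one]
  push_cast
  field_simp

end Aux

/-- If I(f_n) ≤ C n^ρ and α > ρ, then with ε_n = n^{-α} the noise correlation
tends to 1 and P(f_n(ω) ≠ f_n(ω_{ε_n})) → 0 (so STAB({f_n}) ≤ ρ). -/
theorem influence_noise_stability_bound
    {m : ℕ → ℕ} (f : ∀ n, (Fin (m n) → Bool) → ℝ)
    (hb : ∀ n ω, f n ω = 1 ∨ f n ω = -1)
    (C ρ : ℝ) (hC : 0 < C) (hρ : 0 < ρ)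
    (hI : ∀ n : ℕ, totalInfluence (f n) ≤ C * (n : ℝ) ^ ρ)
    (α : ℝ) (hα : ρ < α) :
    Filter.Tendsto (fun n : ℕ => noiseE ((n : ℝ) ^ (-α)) (f n) (f n))
      Filter.atTop (nhds 1) ∧
    Filter.Tendsto (fun n : ℕ => noiseP ((n : ℝ) ^ (-α)) (f n))
      Filter.atTop (nhds 0) := by
  have hα0 : 0 < α := hρ.trans hα
  have hεmem : ∀ n : ℕ, 1 ≤ n → 0 ≤ (n:ℝ) ^ (-α) ∧ (n:ℝ) ^ (-α) ≤ 2 := by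
    intro n hn
    have hn1 : (1:ℝ) ≤ (n:ℝ) := by exact_mod_cast hn
    constructor
    · exact Real.rpow_nonneg (by linarith) _
    · have := Real.rpow_le_one_of_one_le_of_nonpos hn1 (by linarith : -α ≤ 0)
      linarith
  have hub : ∀ n : ℕ, 1 ≤ n →
      noiseP ((n:ℝ) ^ (-α)) (f n) ≤ C / 2 * (n:ℝ) ^ (ρ - α) := by
    intro n hn
    obtain ⟨h0, h2⟩ := hεmem n hn
    have hnpos : (0:ℝ) < (n:ℝ) := by exact_mod_cast Nat.lt_of_lt_of_le Nat.zero_lt_one hn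
    have hIn : totalInfluence (f n) ≤ C * (n:ℝ) ^ ρ := hI n
    have h1 := noiseP_le h0 h2 (f n)
    calc noiseP ((n:ℝ) ^ (-α)) (f n) ≤ (n:ℝ) ^ (-α) / 2 * totalInfluence (f n) := h1
      _ ≤ (n:ℝ) ^ (-α) / 2 * (C * (n:ℝ) ^ ρ) :=
          mul_le_mul_of_nonneg_left hIn (by positivity)
      _ = C / 2 * (n:ℝ) ^ (ρ - α) := by
          rw [show ρ - α = -α + ρ by ring, Real.rpow_add hnpos]
          ring
  have hlim0 : Filter.Tendsto (fun n : ℕ => C / 2 * (n:ℝ) ^ (ρ - α))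
      Filter.atTop (nhds 0) := by
    have h1 : Filter.Tendsto (fun x : ℝ => x ^ (ρ - α)) Filter.atTop (nhds 0) := by
      have := tendsto_rpow_neg_atTop (by linarith : 0 < α - ρ)
      simpa [neg_sub] using this
    have h2 := (h1.comp (tendsto_natCast_atTop_atTop (R := ℝ))).const_mul (C / 2)
    simpa [Function.comp] using h2
  have hP : Filter.Tendsto (fun n : ℕ => noiseP ((n:ℝ) ^ (-α)) (f n))
      Filter.atTop (nhds 0) := by
    refine tendsto_of_tendsto_of_tendsto_of_le_of_le' tendsto_const_nhds hlim0 ?_ ?_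
    · filter_upwards [Filter.eventually_ge_atTop 1] with n hn
      exact noiseP_nonneg (hεmem n hn).1 (hεmem n hn).2 (f n)
    · filter_upwards [Filter.eventually_ge_atTop 1] with n hn
      exact hub n hn
  refine ⟨?_, hP⟩
  have hE : ∀ n : ℕ, noiseE ((n:ℝ) ^ (-α)) (f n) (f n)
      = 1 - 2 * noiseP ((n:ℝ) ^ (-α)) (f n) := fun n => noiseE_eq _ _ (hb n)
  simp only [hE]
  have := (hP.const_mul 2).const_sub 1
  simpa using this
end

section
/- Let T be a spherically symmetric rooted tree with T_n vertices at level n, and let percolation with parameter p be performed on T (each edge open independently with probability p). Setting w_n = p^n T_n, if Σ_n 1/w_n < ∞ then the root is connected to infinity with positive probability. -/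
open MeasureTheory ProbabilityTheory
open scoped ENNReal

lemma lintegral_sq_cs {Ω : Type*} [MeasurableSpace Ω] (μ : Measure Ω)
    (Z : Ω → ℝ≥0∞) (hZ : Measurable Z) (S : Set Ω) (hS : MeasurableSet S)
    (h0 : ∀ ω, ω ∉ S → Z ω = 0) :
    (∫⁻ ω, Z ω ∂μ) ^ 2 ≤ (∫⁻ ω, Z ω ^ 2 ∂μ) * μ S := by
  have hconj : Real.HolderConjugate 2 2 := by constructor <;> norm_num
  have hind : Measurable (S.indicator (1 : Ω → ℝ≥0∞)) :=
    measurable_one.indicator hS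
  have key := ENNReal.lintegral_mul_le_Lp_mul_Lq μ hconj hZ.aemeasurable hind.aemeasurable
  simp only [Pi.mul_apply] at key
  have e1 : ∫⁻ ω, Z ω * S.indicator (1 : Ω → ℝ≥0∞) ω ∂μ = ∫⁻ ω, Z ω ∂μ := by
    apply lintegral_congr; intro ω
    by_cases h : ω ∈ S
    · simp [Set.indicator_of_mem h]
    · simp [Set.indicator_of_notMem h, h0 ω h]
  have e2 : ∫⁻ ω, S.indicator (1 : Ω → ℝ≥0∞) ω ^ (2:ℝ) ∂μ = μ S := by
    rw [← lintegral_indicator_one hS]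
    apply lintegral_congr; intro ω
    by_cases h : ω ∈ S
    · simp [Set.indicator_of_mem h]
    · simp [Set.indicator_of_notMem h]
  have e3 : ∫⁻ ω, Z ω ^ (2:ℝ) ∂μ = ∫⁻ ω, Z ω ^ 2 ∂μ := by
    apply lintegral_congr; intro ω
    rw [← ENNReal.rpow_natCast (Z ω) 2]; norm_num
  rw [e1, e2, e3] at key
  calc (∫⁻ ω, Z ω ∂μ) ^ 2
      ≤ ((∫⁻ ω, Z ω ^ 2 ∂μ) ^ (1/(2:ℝ)) * μ S ^ (1/(2:ℝ))) ^ 2 := by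
        exact pow_le_pow_left' key 2
    _ = (∫⁻ ω, Z ω ^ 2 ∂μ) * μ S := by
        rw [mul_pow, ← ENNReal.rpow_natCast ((∫⁻ ω, Z ω ^ 2 ∂μ) ^ (1/(2:ℝ))) 2,
          ← ENNReal.rpow_natCast (μ S ^ (1/(2:ℝ))) 2, ← ENNReal.rpow_mul, ← ENNReal.rpow_mul]
        norm_num

namespace LyonsAux

variable (a : ℕ → ℕ)

/-- Edge index type. -/
abbrev E := Σ n : ℕ, ∀ i : Fin (n + 1), Fin (a i.val)

/-- Level-`n` vertices. -/
abbrev V (n : ℕ) := ∀ i : Fin n, Fin (a i.val)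

/-- The `m`-th edge on the path from the root to `v`. -/
def edge {n : ℕ} (v : V a n) (m : Fin n) : E a :=
  ⟨m.val, fun i => v ⟨i.val, lt_of_le_of_lt (Nat.lt_succ_iff.mp i.isLt) m.isLt⟩⟩

lemma edge_fst {n : ℕ} (v : V a n) (m : Fin n) : (edge a v m).1 = m.val := rfl

lemma edge_injective {n : ℕ} (v : V a n) : Function.Injective (edge a v) := by
  intro m m' h
  have : m.val = m'.val := congrArg Sigma.fst h
  exact Fin.ext this

lemma edge_eq_iff {n : ℕ} (u v : V a n) (m : Fin n) :
    edge a u m = edge a v m ↔ ∀ i : Fin n, i.val ≤ m.val → u i = v i := by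
  constructor
  · intro h i hi
    have h2 := (Sigma.mk.inj_iff.mp h).2
    have h3 : (fun i : Fin (m.val+1) =>
        u ⟨i.val, lt_of_le_of_lt (Nat.lt_succ_iff.mp i.isLt) m.isLt⟩) =
        (fun i : Fin (m.val+1) =>
        v ⟨i.val, lt_of_le_of_lt (Nat.lt_succ_iff.mp i.isLt) m.isLt⟩) := eq_of_heq h2
    have h4 := congrFun h3 ⟨i.val, Nat.lt_succ_of_le hi⟩
    simpa using h4
  · intro h
    unfold edge
    congr 1
    funext i
    exact h _ (Nat.lt_succ_iff.mp i.isLt)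

/-- Edges with distinct base vertices at equal index force agreement. -/
lemma edge_eq_iff' {n : ℕ} (u v : V a n) (m m' : Fin n) (h : edge a u m = edge a v m') :
    m = m' ∧ ∀ i : Fin n, i.val ≤ m.val → u i = v i := by
  have hm : m.val = m'.val := congrArg Sigma.fst h
  have hm2 : m = m' := Fin.ext hm
  subst hm2
  exact ⟨rfl, (edge_eq_iff a u v m).mp h⟩

/-- The set of edges on the path from root to `v`. -/
def edgeSet {n : ℕ} (v : V a n) : Finset (E a) := Finset.univ.image (edge a v)

lemma card_edgeSet {n : ℕ} (v : V a n) : (edgeSet a v).card = n := by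
  rw [edgeSet, Finset.card_image_of_injective _ (edge_injective a v)]
  simp

/-- The agreement set of two level-`n` vertices. -/
def agreeSet {n : ℕ} (u v : V a n) : Finset (Fin n) :=
  Finset.univ.filter (fun m => ∀ i : Fin n, i.val ≤ m.val → u i = v i)

lemma agreeSet_down {n : ℕ} (u v : V a n) {m m' : Fin n} (h : m ∈ agreeSet a u v)
    (hle : m' ≤ m) : m' ∈ agreeSet a u v := by
  simp only [agreeSet, Finset.mem_filter, Finset.mem_univ, true_and] at h ⊢
  exact fun i hi => h i (le_trans hi hle)

lemma agree_of_lt_card {n : ℕ} (u v : V a n) {i : Fin n}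
    (h : i.val < (agreeSet a u v).card) : u i = v i := by
  by_cases hi : i ∈ agreeSet a u v
  · simp only [agreeSet, Finset.mem_filter] at hi
    exact hi.2 i le_rfl
  · exfalso
    have hsub : agreeSet a u v ⊆ Finset.univ.filter (fun j : Fin n => j.val < i.val) := by
      intro j hj
      simp only [Finset.mem_filter, Finset.mem_univ, true_and]
      by_contra hji
      push_neg at hji
      exact hi (agreeSet_down a u v hj (by exact Fin.le_def.mpr hji))
    have hcard := Finset.card_le_card hsub
    have hcnt : (Finset.univ.filter (fun j : Fin n => j.val < i.val)).card ≤ i.val := by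
      have h5 := Finset.card_le_card_of_injOn
        (s := Finset.univ.filter (fun j : Fin n => j.val < i.val))
        (t := Finset.range i.val) (fun j : Fin n => j.val)
        (fun j hj => Finset.mem_range.mpr (Finset.mem_filter.mp hj).2)
        (fun x _ y _ hxy => Fin.ext hxy)
      simpa using h5
    omega

lemma agreeSet_card_le {n : ℕ} (u v : V a n) : (agreeSet a u v).card ≤ n := by
  calc (agreeSet a u v).card ≤ (Finset.univ : Finset (Fin n)).card :=
        Finset.card_le_card (Finset.filter_subset _ _)
    _ = n := by simp

lemma inter_edgeSet {n : ℕ} (u v : V a n) :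
    edgeSet a u ∩ edgeSet a v = (agreeSet a u v).image (edge a u) := by
  ext e
  simp only [Finset.mem_inter, edgeSet, Finset.mem_image, Finset.mem_univ, true_and,
    agreeSet, Finset.mem_filter]
  constructor
  · rintro ⟨⟨m, rfl⟩, ⟨m', hm'⟩⟩
    obtain ⟨rfl, hagree⟩ := edge_eq_iff' a v u m' m hm'
    exact ⟨m', fun i hi => (hagree i hi).symm, rfl⟩
  · rintro ⟨m, hagree, rfl⟩
    exact ⟨⟨m, rfl⟩, ⟨m, ((edge_eq_iff a u v m).mpr hagree).symm⟩⟩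

lemma card_union_edgeSet {n : ℕ} (u v : V a n) :
    (edgeSet a u ∪ edgeSet a v).card = 2 * n - (agreeSet a u v).card := by
  have h1 := Finset.card_union_add_card_inter (edgeSet a u) (edgeSet a v)
  rw [inter_edgeSet a u v, Finset.card_image_of_injective _ (edge_injective a u),
    card_edgeSet, card_edgeSet] at h1
  omega


lemma filter_agree_eq {n : ℕ} (u : V a n) (k : ℕ) :
    Finset.univ.filter (fun v : V a n => ∀ i : Fin n, i.val < k → v i = u i)
      = Fintype.piFinset (fun i : Fin n => if i.val < k then {u i} else Finset.univ) := by
  ext v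
  simp only [Finset.mem_filter, Finset.mem_univ, true_and, Fintype.mem_piFinset]
  constructor
  · intro h i
    by_cases hik : i.val < k <;> simp [hik, h]
  · intro h i hik
    have hh := h i
    rw [if_pos hik] at hh
    simpa using hh

lemma card_filter_agree {n : ℕ} (u : V a n) (k : ℕ) (hk : k ≤ n) :
    ((Finset.univ.filter (fun v : V a n => ∀ i : Fin n, i.val < k → v i = u i)).card : ℝ≥0∞)
      = ∏ i ∈ Finset.Ico k n, (a i : ℝ≥0∞) := by
  rw [filter_agree_eq, Fintype.card_piFinset]
  have h1 : (∏ i : Fin n, (if i.val < k then ({u i} : Finset (Fin (a i.val))) else Finset.univ).card)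
      = ∏ i : Fin n, (if i.val < k then 1 else a i.val) := by
    apply Finset.prod_congr rfl
    intro i _
    by_cases hik : i.val < k <;> simp [hik]
  rw [h1]
  have h2 : (∏ i : Fin n, (if i.val < k then 1 else a i.val))
      = ∏ i ∈ Finset.range n, (if i < k then 1 else a i) :=
    Fin.prod_univ_eq_prod_range (fun i => if i < k then 1 else a i) n
  rw [h2]
  have h3 : Finset.range n = Finset.Ico 0 k ∪ Finset.Ico k n := by
    rw [Finset.range_eq_Ico, Finset.Ico_union_Ico_eq_Ico (Nat.zero_le k) hk]
  rw [h3, Finset.prod_union (by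
    apply Finset.Ico_disjoint_Ico_consecutive)]
  have h4 : ∏ i ∈ Finset.Ico 0 k, (if i < k then 1 else a i) = 1 := by
    apply Finset.prod_eq_one
    intro i hi
    rw [if_pos (Finset.mem_Ico.mp hi).2]
  have h5 : ∏ i ∈ Finset.Ico k n, (if i < k then 1 else a i) = ∏ i ∈ Finset.Ico k n, a i := by
    apply Finset.prod_congr rfl
    intro i hi
    rw [if_neg (by have := (Finset.mem_Ico.mp hi).1; omega)]
  rw [h4, h5, one_mul]
  push_cast
  rfl

lemma sum_pow_agree_le {n : ℕ} (u : V a n) (pp : ℝ≥0∞) (hpp : pp ≤ 1) :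
    ∑ v : V a n, pp ^ (2 * n - (agreeSet a u v).card)
      ≤ ∑ k ∈ Finset.range (n+1),
          pp ^ n * (pp ^ (n-k) * ∏ i ∈ Finset.Ico k n, (a i : ℝ≥0∞)) := by
  rw [← Finset.sum_fiberwise_of_maps_to (g := fun v : V a n => (agreeSet a u v).card)
    (t := Finset.range (n+1)) (fun v _ => Finset.mem_range.mpr (Nat.lt_succ_of_le (agreeSet_card_le a u v)))]
  apply Finset.sum_le_sum
  intro k hk
  have hkn : k ≤ n := Nat.lt_succ_iff.mp (Finset.mem_range.mp hk)
  have hfiber : ∀ v ∈ Finset.univ.filter (fun v : V a n => (agreeSet a u v).card = k),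
      pp ^ (2 * n - (agreeSet a u v).card) = pp ^ (2 * n - k) := by
    intro v hv
    rw [(Finset.mem_filter.mp hv).2]
  rw [Finset.sum_congr rfl hfiber, Finset.sum_const, nsmul_eq_mul]
  have hsub : Finset.univ.filter (fun v : V a n => (agreeSet a u v).card = k)
      ⊆ Finset.univ.filter (fun v : V a n => ∀ i : Fin n, i.val < k → v i = u i) := by
    intro v hv
    simp only [Finset.mem_filter, Finset.mem_univ, true_and] at hv ⊢
    intro i hik
    exact (agree_of_lt_card a u v (by omega)).symm
  calc ((Finset.univ.filter (fun v : V a n => (agreeSet a u v).card = k)).card : ℝ≥0∞)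
        * pp ^ (2 * n - k)
      ≤ ((Finset.univ.filter (fun v : V a n => ∀ i : Fin n, i.val < k → v i = u i)).card : ℝ≥0∞)
        * pp ^ (2 * n - k) := by
        gcongr
    _ = (∏ i ∈ Finset.Ico k n, (a i : ℝ≥0∞)) * pp ^ (2 * n - k) := by
        rw [card_filter_agree a u k hkn]
    _ = pp ^ n * (pp ^ (n-k) * ∏ i ∈ Finset.Ico k n, (a i : ℝ≥0∞)) := by
        rw [show 2 * n - k = n + (n - k) by omega, pow_add]
        ring


section Measure

variable {Ω : Type*} [MeasurableSpace Ω] (μ : Measure Ω) (X : E a → Ω → Bool)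

/-- The event that edge `e` is open. -/
def openE (e : E a) : Set Ω := X e ⁻¹' {true}

lemma measurableSet_openE (hmeas : ∀ e, Measurable (X e)) (e : E a) :
    MeasurableSet (openE a X e) := (hmeas e) (by trivial)

lemma meas_biInter_openE (hindep : iIndepFun X μ) {pr : ℝ≥0∞}
    (hmarg : ∀ e, μ (openE a X e) = pr) (s : Finset (E a)) :
    μ (⋂ e ∈ s, openE a X e) = pr ^ s.card := by
  unfold openE
  rw [hindep.meas_biInter (fun e _ => ⟨{true}, trivial, rfl⟩)]
  show ∏ e ∈ s, μ (openE a X e) = pr ^ s.card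
  rw [Finset.prod_congr rfl (fun e _ => hmarg e), Finset.prod_const]

/-- The event that all edges from the root to `v` are open. -/
def cyl {n : ℕ} (v : V a n) : Set Ω := ⋂ e ∈ edgeSet a v, openE a X e

lemma measurableSet_cyl (hmeas : ∀ e, Measurable (X e)) {n : ℕ} (v : V a n) :
    MeasurableSet (cyl a X v) :=
  Finset.measurableSet_biInter _ (fun e _ => measurableSet_openE a X hmeas e)

lemma meas_cyl (hindep : iIndepFun X μ) {pr : ℝ≥0∞}
    (hmarg : ∀ e, μ (openE a X e) = pr) {n : ℕ} (v : V a n) :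
    μ (cyl a X v) = pr ^ n := by
  rw [cyl, meas_biInter_openE a μ X hindep hmarg, card_edgeSet]

lemma meas_cyl_inter (hindep : iIndepFun X μ) {pr : ℝ≥0∞}
    (hmarg : ∀ e, μ (openE a X e) = pr) {n : ℕ} (u v : V a n) :
    μ (cyl a X u ∩ cyl a X v) = pr ^ (2 * n - (agreeSet a u v).card) := by
  rw [cyl, cyl, ← Finset.set_biInter_inter,
    meas_biInter_openE a μ X hindep hmarg, card_union_edgeSet]

lemma lintegral_Z (hmeas : ∀ e, Measurable (X e)) (n : ℕ) :
    ∫⁻ ω, (∑ v : V a n, (cyl a X v).indicator 1 ω) ∂μ = ∑ v : V a n, μ (cyl a X v) := by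
  rw [lintegral_finset_sum _ (fun v _ =>
    measurable_one.indicator (measurableSet_cyl a X hmeas v))]
  exact Finset.sum_congr rfl fun v _ => lintegral_indicator_one (measurableSet_cyl a X hmeas v)

lemma lintegral_Z_sq (hmeas : ∀ e, Measurable (X e)) (n : ℕ) :
    ∫⁻ ω, (∑ v : V a n, (cyl a X v).indicator 1 ω) ^ 2 ∂μ
      = ∑ u : V a n, ∑ v : V a n, μ (cyl a X u ∩ cyl a X v) := by
  have hpt : ∀ ω : Ω, (∑ v : V a n, (cyl a X v).indicator 1 ω) ^ 2
      = ∑ u : V a n, ∑ v : V a n, (cyl a X u ∩ cyl a X v).indicator (1 : Ω → ℝ≥0∞) ω := by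
    intro ω
    rw [sq, Finset.sum_mul_sum]
    refine Finset.sum_congr rfl fun u _ => Finset.sum_congr rfl fun v _ => ?_
    rw [Set.inter_indicator_one]
    rfl
  simp_rw [hpt]
  rw [lintegral_finset_sum _ (fun u _ => Finset.measurable_sum _ (fun v _ =>
    measurable_one.indicator ((measurableSet_cyl a X hmeas u).inter (measurableSet_cyl a X hmeas v))))]
  refine Finset.sum_congr rfl fun u _ => ?_
  rw [lintegral_finset_sum _ (fun v _ =>
    measurable_one.indicator ((measurableSet_cyl a X hmeas u).inter (measurableSet_cyl a X hmeas v)))]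
  exact Finset.sum_congr rfl fun v _ => lintegral_indicator_one
    ((measurableSet_cyl a X hmeas u).inter (measurableSet_cyl a X hmeas v))

/-- `v` is connected to the root: all edges on its path are open. -/
def conn (ω : Ω) {n : ℕ} (v : V a n) : Prop := ∀ m : Fin n, X (edge a v m) ω = true

lemma mem_cyl {ω : Ω} {n : ℕ} {v : V a n} : ω ∈ cyl a X v ↔ conn a X ω v := by
  simp only [cyl, Set.mem_iInter, edgeSet, Finset.mem_image, Finset.mem_univ, true_and,
    openE, Set.mem_preimage, Set.mem_singleton_iff, conn]
  constructor
  · intro h m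
    exact h _ ⟨m, rfl⟩
  · rintro h e ⟨m, rfl⟩
    exact h m

/-- Restriction of a vertex to a lower level. -/
def res {n m : ℕ} (h : n ≤ m) (w : V a m) : V a n :=
  fun i => w ⟨i.val, lt_of_lt_of_le i.isLt h⟩

lemma conn_res {ω : Ω} {n m : ℕ} (h : n ≤ m) {w : V a m} (hw : conn a X ω w) :
    conn a X ω (res a h w) := by
  intro k
  have := hw ⟨k.val, lt_of_lt_of_le k.isLt h⟩
  convert this using 2
  rfl

/-- Extend a level-`n` vertex by one more coordinate. -/
def snoc {n : ℕ} (v : V a n) (c : Fin (a n)) : V a (n + 1) :=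
  fun i => if h : i.val < n then v ⟨i.val, h⟩
    else Fin.cast (congrArg a (by omega : n = i.val)) c

lemma res_snoc {n : ℕ} (v : V a n) (c : Fin (a n)) :
    res a (Nat.le_succ n) (snoc a v c) = v := by
  funext i
  simp only [res, snoc]
  rw [dif_pos i.isLt]

lemma cast_w {m : ℕ} (w : V a m) {j k : ℕ} (hj : j < m) (hk : k < m) (h : k = j) :
    w ⟨j, hj⟩ = Fin.cast (congrArg a h) (w ⟨k, hk⟩) := by subst h; rfl

variable (ω : Ω)

/-- `v` is infinitely extendable by connected vertices. -/
def Ext (n : ℕ) (v : V a n) : Prop :=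
  ∀ m (hm : n ≤ m), ∃ w : V a m, res a hm w = v ∧ conn a X ω w

lemma ext_zero (h : ∀ n, ∃ v : V a n, conn a X ω v) :
    Ext a X ω 0 (fun i => i.elim0) := by
  intro m _
  obtain ⟨w, hw⟩ := h m
  exact ⟨w, funext fun i => i.elim0, hw⟩

lemma ext_step (ha : ∀ n, 1 ≤ a n) {n : ℕ} {v : V a n} (hv : Ext a X ω n v) :
    ∃ c : Fin (a n), Ext a X ω (n + 1) (snoc a v c) := by
  by_contra hc
  push_neg at hc
  simp only [Ext, not_forall] at hc
  choose f hf hnf using hc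
  have hne : Nonempty (Fin (a n)) := ⟨⟨0, ha n⟩⟩
  obtain ⟨M, hM⟩ := Finset.exists_le (Finset.univ.image f)
  set M' : ℕ := max M (n + 1) with hM'
  obtain ⟨w, hwres, hwconn⟩ := hv M' (by omega)
  have hnM : n < M' := by omega
  set c : Fin (a n) := w ⟨n, hnM⟩ with hcdef
  have hfc : f c ≤ M' := le_trans (hM _ (Finset.mem_image_of_mem f (Finset.mem_univ c))) (le_max_left _ _)
  refine hnf c ⟨res a hfc w, ?_, conn_res a X hfc hwconn⟩
  funext i
  show w ⟨i.val, lt_of_lt_of_le (lt_of_lt_of_le i.isLt (hf c)) hfc⟩ = snoc a v c i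
  by_cases hi : i.val < n
  · rw [snoc, dif_pos hi]
    exact congrFun hwres ⟨i.val, hi⟩
  · rw [snoc, dif_neg hi]
    exact cast_w a w _ hnM (by omega)

/-- The chosen chain of extendable connected vertices. -/
noncomputable def chain (ha : ∀ n, 1 ≤ a n) (h : ∀ n, ∃ v : V a n, conn a X ω v) :
    ∀ n : ℕ, {v : V a n // Ext a X ω n v}
  | 0 => ⟨fun i => i.elim0, ext_zero a X ω h⟩
  | n + 1 =>
    let p := chain ha h n
    ⟨snoc a p.1 (Classical.choose (ext_step a X ω ha p.2)),
     Classical.choose_spec (ext_step a X ω ha p.2)⟩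

lemma res_chain_succ (ha : ∀ n, 1 ≤ a n) (h : ∀ n, ∃ v : V a n, conn a X ω v) (n : ℕ) :
    res a (Nat.le_succ n) (chain a X ω ha h (n+1)).1 = (chain a X ω ha h n).1 := by
  show res a (Nat.le_succ n) (snoc a (chain a X ω ha h n).1 _) = (chain a X ω ha h n).1
  exact res_snoc a _ _

lemma res_chain (ha : ∀ n, 1 ≤ a n) (h : ∀ n, ∃ v : V a n, conn a X ω v) :
    ∀ m n (hmn : n ≤ m), res a hmn (chain a X ω ha h m).1 = (chain a X ω ha h n).1 := by
  intro m
  induction m with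
  | zero =>
    intro n hn
    have : n = 0 := Nat.le_zero.mp hn
    subst this
    rfl
  | succ m ih =>
    intro n hn
    rcases Nat.lt_or_ge n (m+1) with hlt | hge
    · have hn' : n ≤ m := by omega
      have : res a hn (chain a X ω ha h (m+1)).1
          = res a hn' (res a (Nat.le_succ m) (chain a X ω ha h (m+1)).1) := rfl
      rw [this, res_chain_succ, ih n hn']
    · have : n = m+1 := by omega
      subst this
      rfl

lemma koenig (ha : ∀ n, 1 ≤ a n) (h : ∀ n, ∃ v : V a n, conn a X ω v) :
    ∃ x : (m : ℕ) → Fin (a m), ∀ n : ℕ,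
      X ⟨n, fun i : Fin (n+1) => x i.val⟩ ω = true := by
  refine ⟨fun m => (chain a X ω ha h (m+1)).1 ⟨m, Nat.lt_succ_self m⟩, fun n => ?_⟩
  have hx : (fun i : Fin (n+1) =>
      (chain a X ω ha h (i.val+1)).1 ⟨i.val, Nat.lt_succ_self i.val⟩)
      = (chain a X ω ha h (n+1)).1 := by
    funext i
    exact (congrFun (res_chain a X ω ha h (n+1) (i.val+1) (by omega))
      ⟨i.val, Nat.lt_succ_self _⟩).symm
  rw [hx]
  obtain ⟨w, hres, hconn⟩ := (chain a X ω ha h (n+1)).2 (n+1) le_rfl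
  have hconn2 : conn a X ω (chain a X ω ha h (n+1)).1 := by
    rw [← hres]
    exact conn_res a X le_rfl hconn
  exact hconn2 ⟨n, Nat.lt_succ_self n⟩

end Measure

end LyonsAux

open LyonsAux

/-- **Lyons' theorem ('if' direction) for spherically symmetric trees.**
The spherically symmetric rooted tree with branching numbers `a` has, as its
level-`n` vertices, the functions `∀ i : Fin n, Fin (a i)`; its edges are
indexed by the vertices of level `n + 1` (the edge joining such a vertex to
its parent).  Percolation is given by independent `{true, false}`-valued
random variables `X e`, one for each edge `e`, with `P(X e = true) = p`.
Setting `w n = pⁿ · T_n` with `T_n = ∏_{i<n} a i` the number of level-`n`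
vertices, if `Σ_n 1 / w n < ∞` then with positive probability the root is
connected to infinity, i.e. there is an infinite ray all of whose edges are
open. -/
theorem lyons_spherically_symmetric_second_moment
    {Ω : Type*} [MeasurableSpace Ω] (μ : Measure Ω) [IsProbabilityMeasure μ]
    (a : ℕ → ℕ) (ha : ∀ n, 1 ≤ a n) (p : ℝ) (hp0 : 0 < p) (hp1 : p ≤ 1)
    (X : (Σ n : ℕ, ∀ i : Fin (n + 1), Fin (a i.val)) → Ω → Bool)
    (hmeas : ∀ e, Measurable (X e))
    (hindep : iIndepFun X μ)
    (hmarg : ∀ e, μ {ω | X e ω = true} = ENNReal.ofReal p)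
    (hsum : Summable fun n : ℕ =>
      1 / (p ^ n * ∏ i ∈ Finset.range n, (a i : ℝ))) :
    0 < μ {ω | ∃ x : (m : ℕ) → Fin (a m), ∀ n : ℕ,
        X ⟨n, fun i : Fin (n + 1) => x i.val⟩ ω = true} := by
  classical
  set pr : ℝ≥0∞ := ENNReal.ofReal p with hprdef
  have hpr1 : pr ≤ 1 := ENNReal.ofReal_le_one.mpr hp1
  have hpr0 : pr ≠ 0 := by
    simp only [hprdef, ne_eq, ENNReal.ofReal_eq_zero, not_le]
    exact hp0
  have hprtop : pr ≠ ∞ := ENNReal.ofReal_ne_top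
  have hmarg' : ∀ e, μ (openE a X e) = pr := fun e => hmarg e
  set w : ℕ → ℝ≥0∞ := fun k => pr ^ k * ∏ i ∈ Finset.range k, (a i : ℝ≥0∞) with hwdef
  have hw0 : ∀ k, w k ≠ 0 := by
    intro k
    apply mul_ne_zero (pow_ne_zero _ hpr0)
    apply Finset.prod_ne_zero_iff.mpr
    intro i _
    have := ha i
    simp only [ne_eq, Nat.cast_eq_zero]
    omega
  have hwtop : ∀ k, w k ≠ ∞ := by
    intro k
    apply ENNReal.mul_ne_top (ENNReal.pow_ne_top hprtop)
    rw [← Nat.cast_prod]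
    exact ENNReal.natCast_ne_top _
  have hwreal : ∀ k, w k = ENNReal.ofReal (p ^ k * ∏ i ∈ Finset.range k, (a i : ℝ)) := by
    intro k
    show pr ^ k * (∏ i ∈ Finset.range k, (a i : ℝ≥0∞)) = _
    rw [hprdef, ENNReal.ofReal_mul (by positivity), ← ENNReal.ofReal_pow hp0.le]
    congr 1
    rw [show (∏ i ∈ Finset.range k, (a i : ℝ)) = ((∏ i ∈ Finset.range k, a i : ℕ) : ℝ) by push_cast; rfl,
      ENNReal.ofReal_natCast, Nat.cast_prod]
  set C : ℝ≥0∞ := ∑' k, (w k)⁻¹ with hCdef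
  have hwpos : ∀ k, (0:ℝ) < p ^ k * ∏ i ∈ Finset.range k, (a i : ℝ) := by
    intro k
    apply mul_pos (pow_pos hp0 _)
    apply Finset.prod_pos
    intro i _
    have := ha i
    exact_mod_cast Nat.lt_of_lt_of_le Nat.zero_lt_one this
  have hCtop : C ≠ ∞ := by
    have : C = ENNReal.ofReal (∑' k, 1 / (p ^ k * ∏ i ∈ Finset.range k, (a i : ℝ))) := by
      rw [ENNReal.ofReal_tsum_of_nonneg (fun k => by positivity) hsum]
      apply tsum_congr
      intro k
      rw [hwreal k, one_div, ENNReal.ofReal_inv_of_pos (hwpos k)]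
    rw [this]
    exact ENNReal.ofReal_ne_top
  have hC0 : C ≠ 0 := by
    have h1 : (w 0)⁻¹ ≤ C := ENNReal.le_tsum 0
    have h2 : w 0 = 1 := by simp [hwdef]
    rw [h2] at h1
    simp only [inv_one] at h1
    intro hc
    rw [hc] at h1
    exact (by norm_num : ¬ ((1:ℝ≥0∞) ≤ 0)) h1
  set Scon : ℕ → Set Ω := fun n => ⋃ v : V a n, cyl a X v with hScon
  have hSmeas : ∀ n, MeasurableSet (Scon n) :=
    fun n => MeasurableSet.iUnion (fun v => measurableSet_cyl a X hmeas v)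
  -- The key second-moment estimate
  have hmain : ∀ n, C⁻¹ ≤ μ (Scon n) := by
    intro n
    set Z : Ω → ℝ≥0∞ := fun ω => ∑ v : V a n, (cyl a X v).indicator 1 ω with hZdef
    have hZmeas : Measurable Z :=
      Finset.measurable_sum _ (fun v _ => measurable_one.indicator (measurableSet_cyl a X hmeas v))
    have hZ0 : ∀ ω, ω ∉ Scon n → Z ω = 0 := by
      intro ω hω
      apply Finset.sum_eq_zero
      intro v _
      rw [Set.indicator_of_notMem]
      intro hmem
      exact hω (Set.mem_iUnion.mpr ⟨v, hmem⟩)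
    have hcardV : ((Fintype.card (V a n) : ℝ≥0∞)) = ∏ i ∈ Finset.range n, (a i : ℝ≥0∞) := by
      rw [Fintype.card_pi]
      simp only [Fintype.card_fin]
      rw [← Fin.prod_univ_eq_prod_range (fun i => (a i : ℝ≥0∞)) n]
      push_cast
      rfl
    have h1 : ∫⁻ ω, Z ω ∂μ = w n := by
      rw [hZdef]
      rw [lintegral_Z a μ X hmeas n]
      rw [Finset.sum_congr rfl (fun v _ => meas_cyl a μ X hindep hmarg' v)]
      rw [Finset.sum_const, Finset.card_univ, nsmul_eq_mul, hcardV, hwdef]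
      ring
    have hkey : ∀ k ∈ Finset.range (n+1),
        pr ^ n * (pr ^ (n-k) * ∏ i ∈ Finset.Ico k n, (a i : ℝ≥0∞)) = pr ^ n * (w n * (w k)⁻¹) := by
      intro k hk
      have hkn : k ≤ n := Nat.lt_succ_iff.mp (Finset.mem_range.mp hk)
      congr 1
      have hmul : w k * (pr ^ (n-k) * ∏ i ∈ Finset.Ico k n, (a i : ℝ≥0∞)) = w n := by
        rw [hwdef]
        simp only []
        rw [show pr ^ k * (∏ i ∈ Finset.range k, (a i : ℝ≥0∞)) * (pr ^ (n-k) * ∏ i ∈ Finset.Ico k n, (a i : ℝ≥0∞))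
          = (pr ^ k * pr ^ (n-k)) * ((∏ i ∈ Finset.range k, (a i : ℝ≥0∞)) * ∏ i ∈ Finset.Ico k n, (a i : ℝ≥0∞)) by ring]
        rw [← pow_add, show k + (n - k) = n by omega]
        congr 1
        rw [Finset.range_eq_Ico, Finset.prod_Ico_consecutive _ (Nat.zero_le k) hkn, ← Finset.range_eq_Ico]
      rw [← hmul]
      rw [show w k * (pr ^ (n-k) * ∏ i ∈ Finset.Ico k n, (a i : ℝ≥0∞)) * (w k)⁻¹
        = (w k * (w k)⁻¹) * (pr ^ (n-k) * ∏ i ∈ Finset.Ico k n, (a i : ℝ≥0∞)) by ring]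
      rw [ENNReal.mul_inv_cancel (hw0 k) (hwtop k), one_mul]
    have h2 : ∫⁻ ω, Z ω ^ 2 ∂μ ≤ w n * w n * C := by
      rw [hZdef]
      rw [lintegral_Z_sq a μ X hmeas n]
      calc ∑ u : V a n, ∑ v : V a n, μ (cyl a X u ∩ cyl a X v)
          = ∑ u : V a n, ∑ v : V a n, pr ^ (2 * n - (agreeSet a u v).card) := by
            exact Finset.sum_congr rfl fun u _ => Finset.sum_congr rfl fun v _ =>
              meas_cyl_inter a μ X hindep hmarg' u v
        _ ≤ ∑ u : V a n, ∑ k ∈ Finset.range (n+1),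
              pr ^ n * (pr ^ (n-k) * ∏ i ∈ Finset.Ico k n, (a i : ℝ≥0∞)) := by
            exact Finset.sum_le_sum fun u _ => sum_pow_agree_le a u pr hpr1
        _ = ∑ u : V a n, ∑ k ∈ Finset.range (n+1), pr ^ n * (w n * (w k)⁻¹) := by
            exact Finset.sum_congr rfl fun u _ => Finset.sum_congr rfl hkey
        _ = (Fintype.card (V a n) : ℝ≥0∞) * (pr ^ n * (w n * ∑ k ∈ Finset.range (n+1), (w k)⁻¹)) := by
            rw [Finset.sum_const, Finset.card_univ, nsmul_eq_mul, ← Finset.mul_sum, ← Finset.mul_sum]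
        _ ≤ (Fintype.card (V a n) : ℝ≥0∞) * (pr ^ n * (w n * C)) := by
            gcongr
            exact ENNReal.sum_le_tsum _
        _ = w n * w n * C := by
            rw [hcardV, hwdef]
            ring
    have hcs := lintegral_sq_cs μ Z hZmeas (Scon n) (hSmeas n) hZ0
    rw [h1] at hcs
    have hfinal : w n * w n * 1 ≤ w n * w n * (C * μ (Scon n)) := by
      calc w n * w n * 1 = w n ^ 2 := by ring
        _ ≤ (∫⁻ ω, Z ω ^ 2 ∂μ) * μ (Scon n) := hcs
        _ ≤ w n * w n * C * μ (Scon n) := by gcongr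
        _ = w n * w n * (C * μ (Scon n)) := by ring
    have hone : (1:ℝ≥0∞) ≤ C * μ (Scon n) := by
      have hwn2 : w n * w n ≠ 0 := mul_ne_zero (hw0 n) (hw0 n)
      have hwn2top : w n * w n ≠ ∞ := ENNReal.mul_ne_top (hwtop n) (hwtop n)
      exact (ENNReal.mul_le_mul_iff_right hwn2 hwn2top).mp hfinal
    calc C⁻¹ = C⁻¹ * 1 := (mul_one _).symm
      _ ≤ C⁻¹ * (C * μ (Scon n)) := by gcongr
      _ = (C⁻¹ * C) * μ (Scon n) := by ring
      _ = μ (Scon n) := by rw [ENNReal.inv_mul_cancel hC0 hCtop, one_mul]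
  -- The sets are decreasing
  have hanti : Antitone Scon := by
    apply antitone_nat_of_succ_le
    intro n ω hω
    obtain ⟨v, hv⟩ := Set.mem_iUnion.mp hω
    refine Set.mem_iUnion.mpr ⟨res a (Nat.le_succ n) v, ?_⟩
    exact (mem_cyl a X).mpr (conn_res a X (Nat.le_succ n) ((mem_cyl a X).mp hv))
  have hdir : Directed (· ⊇ ·) Scon := hanti.directed_ge
  have hInter := Directed.measure_iInter (μ := μ)
    (fun n => (hSmeas n).nullMeasurableSet) hdir ⟨0, measure_ne_top μ _⟩
  have hlow : C⁻¹ ≤ μ (⋂ n, Scon n) := by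
    rw [hInter]
    exact le_iInf hmain
  have hsubset : (⋂ n, Scon n) ⊆ {ω | ∃ x : (m : ℕ) → Fin (a m), ∀ n : ℕ,
      X ⟨n, fun i : Fin (n + 1) => x i.val⟩ ω = true} := by
    intro ω hω
    have h : ∀ n, ∃ v : V a n, conn a X ω v := by
      intro n
      obtain ⟨v, hv⟩ := Set.mem_iUnion.mp (Set.mem_iInter.mp hω n)
      exact ⟨v, (mem_cyl a X).mp hv⟩
    exact koenig a X ω ha h
  calc (0:ℝ≥0∞) < C⁻¹ := ENNReal.inv_pos.mpr hCtop
    _ ≤ μ (⋂ n, Scon n) := hlow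
    _ ≤ _ := measure_mono hsubset
end
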